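/- If H is a subgroup of a finite p-group G with index |G : H| = p^m, then the m-th iterated Frattini subgroup Φ_m(G) is contained in H. -/

import Mathlib

/-- The iterated Frattini series of a subgroup, realized as subgroups of the
ambient group: `frattiniIter H 0 = H` and
`frattiniIter H (m+1) = Φ(frattiniIter H m)`. -/
def frattiniIter {G : Type*} [Group G] (H : Subgroup G) : ℕ → Subgroup G
  | 0 => H
  | (m + 1) => (frattini (frattiniIter H m)).map (frattiniIter H m).subtype

open Subgroup in
lemma isCoatom_of_index_prime' {G : Type*} [Group G] {p : ℕ} (hp : p.Prime)
    {M : Subgroup G} (h : M.index = p) : IsCoatom M := by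
  constructor
  · intro htop
    rw [htop, index_top] at h
    exact hp.one_lt.ne' h.symm
  · intro K hMK
    have h1 : M.relIndex K * K.index = p := by rw [relIndex_mul_index hMK.le, h]
    have h2 : M.relIndex K ≠ 1 := by
      rw [Ne, relIndex_eq_one]
      exact fun hl => hMK.ne (le_antisymm hMK.le hl)
    have h3 : K.index ∣ p := Dvd.intro_left _ h1
    rcases (Nat.dvd_prime hp).mp h3 with h4 | h4
    · exact index_eq_one.mp h4
    · exfalso
      rw [h4, Nat.mul_eq_right hp.ne_zero] at h1
      exact h2 h1

open Subgroup in
theorem frattiniIter_le_of_index_eq {G : Type*} [Group G] [Finite G] (p : ℕ)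
    [Fact p.Prime] (hG : IsPGroup p G) (H : Subgroup G) (m : ℕ)
    (hH : H.index = p ^ m) :
    frattiniIter (⊤ : Subgroup G) m ≤ H := by
  have hp : p.Prime := Fact.out
  induction m generalizing H with
  | zero =>
    rw [pow_zero, index_eq_one] at hH
    rw [hH]
    exact le_top
  | succ m ih =>
    -- find K with H ≤ K and K.index = p ^ m
    obtain ⟨N, hcard⟩ := hG.exists_card_eq
    have hmul : Nat.card H * H.index = Nat.card G := H.card_mul_index
    obtain ⟨n, hn⟩ := (hG.to_subgroup H).exists_card_eq
    have hNn : n + (m + 1) = N := by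
      have := hmul
      rw [hn, hH, hcard, ← pow_add] at this
      exact Nat.pow_right_injective hp.two_le this
    have hdvd : p ^ (n + 1) ∣ Nat.card G := by
      rw [hcard, ← hNn]
      exact pow_dvd_pow _ (by omega)
    obtain ⟨K, hKcard, hHK⟩ :=
      Sylow.exists_subgroup_card_pow_prime_le p hdvd H hn (by omega)
    have hKindex : K.index = p ^ m := by
      have hmulK : Nat.card K * K.index = Nat.card G := K.card_mul_index
      rw [hKcard, hcard, ← hNn] at hmulK
      have : p ^ (n + 1) * K.index = p ^ (n + 1) * p ^ m := by
        rw [hmulK, ← pow_add]; congr 1; omega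
      exact Nat.eq_of_mul_eq_mul_left (Nat.pow_pos hp.pos) this
    have hF : frattiniIter (⊤ : Subgroup G) m ≤ K := ih K hKindex
    set F := frattiniIter (⊤ : Subgroup G) m with hFdef
    have hrelHK : H.relIndex K = p := by
      have := relIndex_mul_index hHK
      rw [hH, hKindex, pow_succ, mul_comm] at this
      exact Nat.eq_of_mul_eq_mul_left (Nat.pow_pos (n := m) hp.pos) this
    have hrel_ne : H.relIndex K ≠ 0 := by rw [hrelHK]; exact hp.ne_zero
    have hle : H.relIndex F ≤ p := hrelHK ▸ relIndex_le_of_le_right hF hrel_ne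
    obtain ⟨k, hk⟩ := (hG.to_subgroup F).index (H := H.subgroupOf F)
    have hrelF : H.relIndex F = p ^ k := hk
    have hk1 : k ≤ 1 := by
      by_contra hc
      have : p ^ 2 ≤ p ^ k := Nat.pow_le_pow_right hp.pos (by omega)
      have hpp : p < p ^ 2 := by nlinarith [hp.one_lt]
      omega
    interval_cases k
    · -- relIndex = 1 : F ≤ H
      rw [pow_zero, relIndex_eq_one] at hrelF
      show (frattini F).map F.subtype ≤ H
      exact le_trans (map_subtype_le _) hrelF
    · -- relIndex = p : H.subgroupOf F is a coatom of F
      have hco : IsCoatom (H.subgroupOf F) := isCoatom_of_index_prime' hp (hk.trans (pow_one p))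
      show (frattini F).map F.subtype ≤ H
      calc (frattini F).map F.subtype ≤ (H.subgroupOf F).map F.subtype :=
            map_mono (frattini_le_coatom hco)
        _ = H ⊓ F := subgroupOf_map_subtype H F
        _ ≤ H := inf_le_left
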